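/- Let k be a field and let a, b, m be natural numbers with m ≤ a and m ≤ b. The k-vector space of bihomogeneous polynomials of bidegree (a, b) in k[x_0, x_1; y_0, y_1] such that every monomial x_0^{a−i} x_1^{i} y_0^{b−j} y_1^{j} occurring with nonzero coefficient satisfies i + j ≥ m (multiplicity at least m at the point ([1:0],[1:0])) is k-linearly isomorphic to the k-vector space of homogeneous polynomials of degree a + b − m in k[z_0, z_1, z_2] such that every monomial z_0^{α} z_1^{β} z_2^{γ} occurring with nonzero coefficient satisfies β + γ ≥ b − m and α + γ ≥ a − m (multiplicity at least b − m at [1:0:0] and at least a − m at [0:1:0]). An isomorphism is induced by the bijection (i, j) ↦ (α, β, γ) = (a − i, b − j, i + j − m) on the corresponding monomial bases. In particular the two spaces have the same dimension. -/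

import Mathlib

open MvPolynomial

/-- The `k`-subspace of `MvPolynomial σ k` of polynomials whose support is contained
in a given set `S` of exponents. -/
def suppSubmodule (k : Type*) [Field k] (σ : Type*) [DecidableEq σ] (S : Set (σ →₀ ℕ)) :
    Submodule k (MvPolynomial σ k) where
  carrier := {f | ∀ a ∈ f.support, a ∈ S}
  zero_mem' := by intro a ha; simp at ha
  add_mem' := by
    intro f g hf hg a ha
    rcases Finset.mem_union.mp (MvPolynomial.support_add ha) with h | h
    · exact hf a h
    · exact hg a h
  smul_mem' := by
    intro c f hf a ha
    exact hf a (MvPolynomial.support_smul ha)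

/-- Bihomogeneous polynomials of bidegree `(a,b)` in `k[x_0,x_1;y_0,y_1]` (variables
`0,1` are `x_0,x_1` and variables `2,3` are `y_0,y_1`) with multiplicity at least `m` at
the point `([1:0],[1:0])`: every exponent `(a-i, i, b-j, j)` occurring satisfies `i+j ≥ m`. -/
def quadricSys (k : Type*) [Field k] (a b m : ℕ) : Submodule k (MvPolynomial (Fin 4) k) :=
  suppSubmodule k (Fin 4) {e | e 0 + e 1 = a ∧ e 2 + e 3 = b ∧ m ≤ e 1 + e 3}

/-- Homogeneous polynomials of degree `a+b-m` in `k[z_0,z_1,z_2]` with multiplicity at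
least `b-m` at `[1:0:0]` and at least `a-m` at `[0:1:0]`. -/
def planeSys (k : Type*) [Field k] (a b m : ℕ) : Submodule k (MvPolynomial (Fin 3) k) :=
  suppSubmodule k (Fin 3) {e | e 0 + e 1 + e 2 = a + b - m ∧
    b - m ≤ e 1 + e 2 ∧ a - m ≤ e 0 + e 2}

/-- The correspondence `L_Q(a,b,m) ↔ L_2(a+b-m, b-m, a-m)`: there is a `k`-linear
isomorphism between the two spaces, induced on monomial bases by the bijection
`x_0^{a-i} x_1^i y_0^{b-j} y_1^j ↦ z_0^{a-i} z_1^{b-j} z_2^{i+j-m}`. In particular the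
two spaces have the same dimension. -/

noncomputable def phiM (m : ℕ) : (Fin 4 →₀ ℕ) → (Fin 3 →₀ ℕ) :=
  fun e => Finsupp.equivFunOnFinite.symm ![e 0, e 2, e 1 + e 3 - m]

noncomputable def psiAB (a b : ℕ) : (Fin 3 →₀ ℕ) → (Fin 4 →₀ ℕ) :=
  fun e => Finsupp.equivFunOnFinite.symm ![e 0, a - e 0, e 1, b - e 1]

def SQ (a b m : ℕ) : Set (Fin 4 →₀ ℕ) :=
  {e | e 0 + e 1 = a ∧ e 2 + e 3 = b ∧ m ≤ e 1 + e 3}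
def SP (a b m : ℕ) : Set (Fin 3 →₀ ℕ) := {e | e 0 + e 1 + e 2 = a + b - m ∧
    b - m ≤ e 1 + e 2 ∧ a - m ≤ e 0 + e 2}

lemma phi_mem {a b m : ℕ} {e : Fin 4 →₀ ℕ} (he : e ∈ SQ a b m) : phiM m e ∈ SP a b m := by
  obtain ⟨h1, h2, h3⟩ := he
  refine ⟨?_, ?_, ?_⟩
  · simp [phiM]; omega
  · simp [phiM]; omega
  · simp [phiM]; omega

lemma psi_mem {a b m : ℕ} (hma : m ≤ a) (hmb : m ≤ b) {e : Fin 3 →₀ ℕ}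
    (he : e ∈ SP a b m) : psiAB a b e ∈ SQ a b m := by
  obtain ⟨h1, h2, h3⟩ := he
  refine ⟨?_, ?_, ?_⟩
  · simp [psiAB]; omega
  · simp [psiAB]; omega
  · simp [psiAB]; omega

lemma psi_phi {a b m : ℕ} {e : Fin 4 →₀ ℕ} (he : e ∈ SQ a b m) :
    psiAB a b (phiM m e) = e := by
  obtain ⟨h1, h2, h3⟩ := he
  ext i
  fin_cases i
  · simp [psiAB, phiM]
  · simp [psiAB, phiM]; omega
  · simp [psiAB, phiM]
  · simp [psiAB, phiM]; omega

lemma phi_psi {a b m : ℕ} (hma : m ≤ a) (hmb : m ≤ b) {e : Fin 3 →₀ ℕ}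
    (he : e ∈ SP a b m) : phiM m (psiAB a b e) = e := by
  obtain ⟨h1, h2, h3⟩ := he
  ext i
  fin_cases i
  · simp [psiAB, phiM]
  · simp [psiAB, phiM]
  · simp [psiAB, phiM]; omega

lemma phi_injOn {a b m : ℕ} : Set.InjOn (phiM m) (SQ a b m) := fun x hx y hy h => by
  rw [← psi_phi (a := a) (b := b) hx, h, psi_phi hy]

theorem quadric_to_plane_isomorphism
    (k : Type*) [Field k] (a b m : ℕ) (hma : m ≤ a) (hmb : m ≤ b) :
    (∃ e : quadricSys k a b m ≃ₗ[k] planeSys k a b m,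
      ∀ (f : quadricSys k a b m) (i j : ℕ), i ≤ a → j ≤ b → m ≤ i + j →
        MvPolynomial.coeff (Finsupp.equivFunOnFinite.symm ![a - i, b - j, i + j - m])
            (e f : MvPolynomial (Fin 3) k) =
          MvPolynomial.coeff (Finsupp.equivFunOnFinite.symm ![a - i, i, b - j, j])
            (f : MvPolynomial (Fin 4) k)) ∧
    Module.rank k (quadricSys k a b m) = Module.rank k (planeSys k a b m) := by
  classical
  have hsuppQ : ∀ f : quadricSys k a b m,
      ↑(f : MvPolynomial (Fin 4) k).support ⊆ SQ a b m := fun f d hd => f.2 d hd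
  have hsuppP : ∀ f : planeSys k a b m,
      ↑(f : MvPolynomial (Fin 3) k).support ⊆ SP a b m := fun f d hd => f.2 d hd
  have hmemP : ∀ f : quadricSys k a b m,
      AddMonoidAlgebra.mapDomain (phiM m) (f : MvPolynomial (Fin 4) k) ∈ planeSys k a b m := by
    intro f d hd
    obtain ⟨e, he, rfl⟩ := Finset.mem_image.mp (Finsupp.mapDomain_support hd)
    exact phi_mem (hsuppQ f he)
  have hmemQ : ∀ f : planeSys k a b m,
      AddMonoidAlgebra.mapDomain (psiAB a b) (f : MvPolynomial (Fin 3) k) ∈ quadricSys k a b m := by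
    intro f d hd
    obtain ⟨e, he, rfl⟩ := Finset.mem_image.mp (Finsupp.mapDomain_support hd)
    exact psi_mem hma hmb (hsuppP f he)
  let F : quadricSys k a b m →ₗ[k] planeSys k a b m :=
    ((AddMonoidAlgebra.mapDomainLinearMap k k (phiM m)).comp (quadricSys k a b m).subtype).codRestrict
      (planeSys k a b m) hmemP
  let G : planeSys k a b m →ₗ[k] quadricSys k a b m :=
    ((AddMonoidAlgebra.mapDomainLinearMap k k (psiAB a b)).comp (planeSys k a b m).subtype).codRestrict
      (quadricSys k a b m) hmemQ
  have hGF : G.comp F = LinearMap.id := by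
    refine LinearMap.ext fun f => Subtype.ext ?_
    show AddMonoidAlgebra.ofCoeff (Finsupp.mapDomain (psiAB a b) (Finsupp.mapDomain (phiM m)
      (AddMonoidAlgebra.coeff (f : MvPolynomial (Fin 4) k)))) =
      AddMonoidAlgebra.ofCoeff (AddMonoidAlgebra.coeff (f : MvPolynomial (Fin 4) k))
    congr 1
    rw [← Finsupp.mapDomain_comp]
    rw [Finsupp.mapDomain_congr (g := id), Finsupp.mapDomain_id]
    intro e he
    exact psi_phi (hsuppQ f he)
  have hFG : F.comp G = LinearMap.id := by
    refine LinearMap.ext fun f => Subtype.ext ?_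
    show AddMonoidAlgebra.ofCoeff (Finsupp.mapDomain (phiM m) (Finsupp.mapDomain (psiAB a b)
      (AddMonoidAlgebra.coeff (f : MvPolynomial (Fin 3) k)))) =
      AddMonoidAlgebra.ofCoeff (AddMonoidAlgebra.coeff (f : MvPolynomial (Fin 3) k))
    congr 1
    rw [← Finsupp.mapDomain_comp]
    rw [Finsupp.mapDomain_congr (g := id), Finsupp.mapDomain_id]
    intro e he
    exact phi_psi hma hmb (hsuppP f he)
  let E : quadricSys k a b m ≃ₗ[k] planeSys k a b m := LinearEquiv.ofLinear F G hFG hGF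
  refine ⟨⟨E, ?_⟩, E.rank_eq⟩
  intro f i j hia hjb hmij
  set s : Fin 4 →₀ ℕ := Finsupp.equivFunOnFinite.symm ![a - i, i, b - j, j] with hs
  have hsSQ : s ∈ SQ a b m := by
    refine ⟨?_, ?_, ?_⟩
    · simp [hs]; omega
    · simp [hs]; omega
    · simp [hs]; omega
  have hphis : phiM m s = Finsupp.equivFunOnFinite.symm ![a - i, b - j, i + j - m] := by
    ext l
    fin_cases l
    · simp [phiM, hs]
    · simp [phiM, hs]
    · simp [phiM, hs]
  show Finsupp.mapDomain (phiM m) (AddMonoidAlgebra.coeff (f : MvPolynomial (Fin 4) k))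
      (Finsupp.equivFunOnFinite.symm ![a - i, b - j, i + j - m]) = _
  rw [← hphis, Finsupp.mapDomain_apply' (SQ a b m) _ (hsuppQ f) phi_injOn hsSQ]
  rfl
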